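/- Let n ∈ ℕ. For every matrix A ∈ S_n there exist a unique positive integer m with m² | n and a unique matrix B ∈ S_{n/m²} whose four entries have greatest common divisor 1, such that A = m·B. Consequently, in the free abelian group on 2×2 integer matrices, Σ_{A ∈ S_n} A = Σ_{m : m² | n} Σ_B m·B, where the inner sum runs over all B ∈ S_{n/m²} with entries of greatest common divisor 1; i.e. the Hecke element T_n = Σ_{A ∈ S_n} A satisfies T_n = Σ_{m² | n} (m, 0; 0, m)·T̃_{n/m²}, and T_n = T̃_n if and only if n is squarefree. -/

import Mathlib

abbrev Mat2 := Matrix (Fin 2) (Fin 2) ℤ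

/-- The generator `A ↦ A` of the free abelian group on 2×2 integer matrices
(with multiplication induced by matrix multiplication). -/
noncomputable def sing (A : Mat2) : MonoidAlgebra ℤ Mat2 :=
  MonoidAlgebra.single A 1

/-- `Sset n`: matrices `(a, b; c, d)` with `a > c ≥ 0`, `d > b ≥ 0`,
`ad − bc = n`. -/
def Sset (n : ℕ) : Set Mat2 :=
  {A | 0 ≤ A 1 0 ∧ A 1 0 < A 0 0 ∧ 0 ≤ A 0 1 ∧ A 0 1 < A 1 1 ∧
    A 0 0 * A 1 1 - A 0 1 * A 1 0 = (n : ℤ)}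

/-- The Hecke element `T_n = Σ_{A ∈ S_n} A` (all entries of elements of `S_n`
lie in `{0, …, n}`). -/
noncomputable def Tfull (n : ℕ) : MonoidAlgebra ℤ Mat2 :=
  ∑ a ∈ Finset.range (n + 1), ∑ b ∈ Finset.range (n + 1),
    ∑ c ∈ Finset.range (n + 1), ∑ d ∈ Finset.range (n + 1),
      if c < a ∧ b < d ∧ a * d = n + b * c then
        sing !![(a : ℤ), (b : ℤ); (c : ℤ), (d : ℤ)]
      else 0

/-- `T̃_n = Σ A`, the sum over all `A ∈ S_n` whose entries have greatest common
divisor `1`. -/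
noncomputable def Ttil (n : ℕ) : MonoidAlgebra ℤ Mat2 :=
  ∑ a ∈ Finset.range (n + 1), ∑ b ∈ Finset.range (n + 1),
    ∑ c ∈ Finset.range (n + 1), ∑ d ∈ Finset.range (n + 1),
      if c < a ∧ b < d ∧ a * d = n + b * c ∧
          Nat.gcd (Nat.gcd a b) (Nat.gcd c d) = 1 then
        sing !![(a : ℤ), (b : ℤ); (c : ℤ), (d : ℤ)]
      else 0

/-- Proposition 1.2: every `A ∈ S_n` is uniquely `m·B` with `m² ∣ n`, `m > 0`
and `B ∈ S_{n/m²}` of entry-gcd `1`; consequently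
`T_n = Σ_{m² ∣ n} (m, 0; 0, m)·T̃_{n/m²}`, and `T_n = T̃_n` iff `n` is
squarefree. -/
abbrev T4 := ℕ × ℕ × ℕ × ℕ
def scl (m : ℕ) (p : T4) : T4 := (m*p.1, m*p.2.1, m*p.2.2.1, m*p.2.2.2)
def gcd4 (p : T4) : ℕ := Nat.gcd (Nat.gcd p.1 p.2.1) (Nat.gcd p.2.2.1 p.2.2.2)
def Ffull (n : ℕ) : Finset T4 :=
  (Finset.range (n+1) ×ˢ Finset.range (n+1) ×ˢ Finset.range (n+1) ×ˢ Finset.range (n+1)).filter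
    (fun p => p.2.2.1 < p.1 ∧ p.2.1 < p.2.2.2 ∧ p.1 * p.2.2.2 = n + p.2.1 * p.2.2.1)
def Fprim (n : ℕ) : Finset T4 :=
  (Finset.range (n+1) ×ˢ Finset.range (n+1) ×ˢ Finset.range (n+1) ×ˢ Finset.range (n+1)).filter
    (fun p => p.2.2.1 < p.1 ∧ p.2.1 < p.2.2.2 ∧ p.1 * p.2.2.2 = n + p.2.1 * p.2.2.1 ∧ gcd4 p = 1)
lemma bound {n a b c d : ℕ} (h1 : c < a) (h2 : b < d) (h3 : a*d = n + b*c) :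
    a ≤ n ∧ b ≤ n ∧ c ≤ n ∧ d ≤ n := by
  have key : b*c + a + d ≤ a*d + 1 := by nlinarith
  rw [h3] at key
  exact ⟨by omega, by omega, by omega, by omega⟩
lemma mem_Ffull {n : ℕ} {p : T4} : p ∈ Ffull n ↔
    p.2.2.1 < p.1 ∧ p.2.1 < p.2.2.2 ∧ p.1 * p.2.2.2 = n + p.2.1 * p.2.2.1 := by
  rcases p with ⟨a,b,c,d⟩
  simp only [Ffull, Finset.mem_filter, Finset.mem_product, Finset.mem_range]
  refine ⟨fun h => h.2, fun ⟨h1, h2, h3⟩ => ?_⟩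
  obtain ⟨ha, hb, hc, hd⟩ := bound h1 h2 h3
  exact ⟨⟨by omega, by omega, by omega, by omega⟩, h1, h2, h3⟩
lemma mem_Fprim {n : ℕ} {p : T4} : p ∈ Fprim n ↔
    p.2.2.1 < p.1 ∧ p.2.1 < p.2.2.2 ∧ p.1 * p.2.2.2 = n + p.2.1 * p.2.2.1 ∧ gcd4 p = 1 := by
  rcases p with ⟨a,b,c,d⟩
  simp only [Fprim, Finset.mem_filter, Finset.mem_product, Finset.mem_range]
  refine ⟨fun h => h.2, fun ⟨h1, h2, h3, h4⟩ => ?_⟩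
  obtain ⟨ha, hb, hc, hd⟩ := bound h1 h2 h3
  exact ⟨⟨by omega, by omega, by omega, by omega⟩, h1, h2, h3, h4⟩
lemma gcd4_scl (m : ℕ) (p : T4) : gcd4 (scl m p) = m * gcd4 p := by
  simp [gcd4, scl, Nat.gcd_mul_left]
lemma gcd4_dvd (p : T4) : gcd4 p ∣ p.1 ∧ gcd4 p ∣ p.2.1 ∧ gcd4 p ∣ p.2.2.1 ∧ gcd4 p ∣ p.2.2.2 :=
  ⟨(Nat.gcd_dvd_left _ _).trans (Nat.gcd_dvd_left _ _),
    (Nat.gcd_dvd_left _ _).trans (Nat.gcd_dvd_right _ _),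
    (Nat.gcd_dvd_right _ _).trans (Nat.gcd_dvd_left _ _),
    (Nat.gcd_dvd_right _ _).trans (Nat.gcd_dvd_right _ _)⟩

lemma Ffull_decomp (n : ℕ) :
    Ffull n = ((Finset.range (n+1)).filter (fun m => 0 < m ∧ m ^ 2 ∣ n)).biUnion
      (fun m => (Fprim (n / m ^ 2)).image (scl m)) := by
  ext p
  simp only [Finset.mem_biUnion, Finset.mem_filter, Finset.mem_image, Finset.mem_range]
  constructor
  · intro hp
    rcases p with ⟨a,b,c,d⟩
    obtain ⟨h1, h2, h3⟩ := mem_Ffull.mp hp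
    dsimp only at h1 h2 h3
    obtain ⟨a', ha⟩ := (gcd4_dvd (a,b,c,d)).1
    obtain ⟨b', hb⟩ := (gcd4_dvd (a,b,c,d)).2.1
    obtain ⟨c', hc⟩ := (gcd4_dvd (a,b,c,d)).2.2.1
    obtain ⟨d', hd⟩ := (gcd4_dvd (a,b,c,d)).2.2.2
    dsimp only at ha hb hc hd
    set g := gcd4 (a,b,c,d) with hg
    have hgpos : 0 < g := Nat.pos_of_dvd_of_pos ⟨a', ha⟩ (by omega)
    have hsq : g ^ 2 ∣ n := by
      have h4 : a * d - b * c = n := by omega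
      have h5 : g ^ 2 ∣ a * d := ⟨a' * d', by rw [ha, hd]; ring⟩
      have h6 : g ^ 2 ∣ b * c := ⟨b' * c', by rw [hb, hc]; ring⟩
      exact h4 ▸ Nat.dvd_sub h5 h6
    obtain ⟨k, hk⟩ := hsq
    have hkdiv : n / g ^ 2 = k := by rw [hk]; exact Nat.mul_div_cancel_left _ (by positivity)
    have hdet' : a' * d' = k + b' * c' := by
      have hmul : g ^ 2 * (a' * d') = g ^ 2 * (k + b' * c') := by
        have : a * d = n + b * c := h3
        rw [ha, hd, hb, hc, hk] at this
        ring_nf at this ⊢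
        nlinarith [this]
      exact Nat.eq_of_mul_eq_mul_left (by positivity) hmul
    have hscl : scl g (a',b',c',d') = (a,b,c,d) := by
      simp [scl, ← ha, ← hb, ← hc, ← hd]
    have hgcd' : gcd4 (a',b',c',d') = 1 := by
      have h7 := gcd4_scl g (a',b',c',d')
      rw [hscl, ← hg] at h7
      have : g * gcd4 (a',b',c',d') = g * 1 := by rw [← h7, mul_one]
      exact Nat.eq_of_mul_eq_mul_left hgpos this
    refine ⟨g, ⟨?_, hgpos, ⟨k, hk⟩⟩, (a',b',c',d'), ?_, hscl⟩
    · have hga : g ≤ a := Nat.le_of_dvd (by omega) ⟨a', ha⟩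
      have := (bound h1 h2 h3).1
      omega
    · rw [mem_Fprim, hkdiv]
      dsimp only
      refine ⟨?_, ?_, hdet', hgcd'⟩
      · have : g * c' < g * a' := by omega
        exact Nat.lt_of_mul_lt_mul_left this
      · have : g * b' < g * d' := by omega
        exact Nat.lt_of_mul_lt_mul_left this
  · rintro ⟨m, ⟨hm1, hm2, hm3⟩, q, hq, rfl⟩
    rcases q with ⟨a,b,c,d⟩
    obtain ⟨h1, h2, h3, -⟩ := mem_Fprim.mp hq
    dsimp only at h1 h2 h3
    rw [mem_Ffull]
    refine ⟨(Nat.mul_lt_mul_left hm2).mpr h1, (Nat.mul_lt_mul_left hm2).mpr h2, ?_⟩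
    have hk : m ^ 2 * (n / m ^ 2) = n := Nat.mul_div_cancel' hm3
    show m * a * (m * d) = n + m * b * (m * c)
    calc m * a * (m * d) = m^2 * (a * d) := by ring
    _ = m^2 * (n / m^2) + m^2 * (b*c) := by rw [h3]; ring
    _ = n + m * b * (m * c) := by rw [hk]; ring

def matp (p : T4) : Mat2 := !![(p.1 : ℤ), (p.2.1 : ℤ); (p.2.2.1 : ℤ), (p.2.2.2 : ℤ)]

lemma Tfull_eq (n : ℕ) : Tfull n = ∑ p ∈ Ffull n, sing (matp p) := by
  rw [Ffull, Finset.sum_filter, Finset.sum_product]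
  simp only [Finset.sum_product]
  rfl

lemma Ttil_eq (n : ℕ) : Ttil n = ∑ p ∈ Fprim n, sing (matp p) := by
  rw [Fprim, Finset.sum_filter, Finset.sum_product]
  simp only [Finset.sum_product]
  rfl

lemma scl_inj {m : ℕ} (hm : 0 < m) : Function.Injective (scl m) := by
  rintro ⟨a,b,c,d⟩ ⟨a',b',c',d'⟩ h
  simp only [scl, Prod.mk.injEq] at h
  obtain ⟨h1, h2, h3, h4⟩ := h
  exact Prod.ext (Nat.eq_of_mul_eq_mul_left hm h1) (Prod.ext (Nat.eq_of_mul_eq_mul_left hm h2)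
    (Prod.ext (Nat.eq_of_mul_eq_mul_left hm h3) (Nat.eq_of_mul_eq_mul_left hm h4)))

lemma matp_inj : Function.Injective matp := by
  rintro ⟨a,b,c,d⟩ ⟨a',b',c',d'⟩ h
  have e : ∀ i j, (matp (a,b,c,d)) i j = (matp (a',b',c',d')) i j := fun i j => by rw [h]
  have e00 := e 0 0
  have e01 := e 0 1
  have e10 := e 1 0
  have e11 := e 1 1
  simp only [matp, Matrix.of_apply, Matrix.cons_val', Matrix.cons_val_zero, Matrix.cons_val_one,
    Matrix.head_cons, Matrix.empty_val', Matrix.cons_val_fin_one, Nat.cast_inj] at e00 e01 e10 e11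
  simp_all

lemma matp_scl (m : ℕ) (p : T4) :
    matp (scl m p) = !![(m : ℤ), 0; 0, (m : ℤ)] * matp p := by
  ext i j
  fin_cases i <;> fin_cases j <;>
    simp [matp, scl, Matrix.mul_apply, Fin.sum_univ_two] <;> push_cast <;> ring

lemma part2 (n : ℕ) :
    Tfull n = ∑ m ∈ (Finset.range (n + 1)).filter (fun m => 0 < m ∧ m ^ 2 ∣ n),
      sing !![(m : ℤ), 0; 0, (m : ℤ)] * Ttil (n / m ^ 2) := by
  rw [Tfull_eq, Ffull_decomp]
  rw [Finset.sum_biUnion ?disj]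
  case disj =>
    intro m hm m' hm' hne
    simp only [Finset.mem_coe, Finset.mem_filter, Finset.mem_range] at hm hm'
    refine Finset.disjoint_left.mpr ?_
    rintro p hp hp'
    simp only [Finset.mem_image] at hp hp'
    obtain ⟨q, hq, rfl⟩ := hp
    obtain ⟨q', hq', he⟩ := hp'
    have g1 : gcd4 q = 1 := (mem_Fprim.mp hq).2.2.2
    have g2 : gcd4 q' = 1 := (mem_Fprim.mp hq').2.2.2
    have hgg := congrArg gcd4 he
    rw [gcd4_scl, gcd4_scl, g1, g2] at hgg
    exact hne (by omega)
  refine Finset.sum_congr rfl fun m hm => ?_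
  simp only [Finset.mem_filter, Finset.mem_range] at hm
  rw [Finset.sum_image (fun a _ b _ h => scl_inj hm.2.1 h), Ttil_eq, Finset.mul_sum]
  refine Finset.sum_congr rfl fun q hq => ?_
  rw [matp_scl]
  simp only [sing, MonoidAlgebra.single_mul_single, one_mul]

lemma coeff_sum (s : Finset T4) (t : T4) :
    (∑ p ∈ s, sing (matp p)).coeff (matp t) = if t ∈ s then 1 else 0 := by
  rw [MonoidAlgebra.coeff_sum, Finset.sum_apply']
  rw [Finset.sum_congr rfl (fun p _ => ?_)]
  · exact Finset.sum_ite_eq' s t (fun _ => (1:ℤ))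
  · show (MonoidAlgebra.single (matp p) (1:ℤ)).coeff (matp t) = if p = t then 1 else 0
    rw [MonoidAlgebra.coeff_single, Finsupp.single_apply]
    congr 1
    simp only [eq_iff_iff]
    exact ⟨fun h => matp_inj h, fun h => by rw [h]⟩

lemma gcd4_sq_dvd {n : ℕ} {p : T4} (hp : p ∈ Ffull n) : gcd4 p ^ 2 ∣ n := by
  rcases p with ⟨a,b,c,d⟩
  obtain ⟨h1, h2, h3⟩ := mem_Ffull.mp hp
  dsimp only at h1 h2 h3
  obtain ⟨a', ha⟩ := (gcd4_dvd (a,b,c,d)).1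
  obtain ⟨b', hb⟩ := (gcd4_dvd (a,b,c,d)).2.1
  obtain ⟨c', hc⟩ := (gcd4_dvd (a,b,c,d)).2.2.1
  obtain ⟨d', hd⟩ := (gcd4_dvd (a,b,c,d)).2.2.2
  dsimp only at ha hb hc hd
  set g := gcd4 (a,b,c,d) with hg
  have h4 : a * d - b * c = n := by omega
  have h5 : g ^ 2 ∣ a * d := ⟨a' * d', by rw [ha, hd]; ring⟩
  have h6 : g ^ 2 ∣ b * c := ⟨b' * c', by rw [hb, hc]; ring⟩
  exact h4 ▸ Nat.dvd_sub h5 h6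

lemma part3 (n : ℕ) (hn : 1 ≤ n) : Tfull n = Ttil n ↔ Squarefree n := by
  constructor
  · intro h
    rw [Nat.squarefree_iff_prime_squarefree]
    intro p hp hdvd
    have hpd : p ∣ n := (dvd_mul_right p p).trans hdvd
    have hnp : 0 < n / p := Nat.div_pos (Nat.le_of_dvd (by omega) hpd) hp.pos
    set t0 : T4 := (p, 0, 0, n / p) with ht0
    have ht0mem : t0 ∈ Ffull n := by
      rw [mem_Ffull]
      refine ⟨hp.pos, hnp, ?_⟩
      show p * (n / p) = n + 0 * 0
      rw [Nat.mul_div_cancel' hpd]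
      ring
    have ht0n : t0 ∉ Fprim n := by
      rw [mem_Fprim]
      rintro ⟨-, -, -, hg⟩
      have hgp : gcd4 t0 = p := by
        have hpdvd : p ∣ n / p := (Nat.dvd_div_iff_mul_dvd hpd).mpr hdvd
        simp [gcd4, ht0, Nat.gcd_eq_left hpdvd]
      rw [hgp] at hg
      exact hp.one_lt.ne' hg
    have h' : (∑ q ∈ Ffull n, sing (matp q)) = ∑ q ∈ Fprim n, sing (matp q) := by
      rw [← Tfull_eq, ← Ttil_eq, h]
    have hco := congrArg (fun f : MonoidAlgebra ℤ Mat2 => f.coeff (matp t0)) h'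
    simp only [coeff_sum, if_pos ht0mem, if_neg ht0n] at hco
    exact one_ne_zero hco
  · intro hsf
    rw [Tfull_eq, Ttil_eq]
    congr 1
    ext p
    rw [mem_Ffull, mem_Fprim]
    constructor
    · intro h
      refine ⟨h.1, h.2.1, h.2.2, ?_⟩
      have hd := gcd4_sq_dvd (mem_Ffull.mpr h)
      have hu := hsf (gcd4 p) (by rwa [← pow_two])
      exact Nat.isUnit_iff.mp hu
    · exact fun h => ⟨h.1, h.2.1, h.2.2.1⟩

lemma gcdA_mul (B : Mat2) (m : ℕ) :
    Int.gcd (Int.gcd (((m:ℤ) • B) 0 0) (((m:ℤ) • B) 0 1))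
      (Int.gcd (((m:ℤ) • B) 1 0) (((m:ℤ) • B) 1 1))
    = m * Int.gcd (Int.gcd (B 0 0) (B 0 1)) (Int.gcd (B 1 0) (B 1 1)) := by
  simp only [Matrix.smul_apply, smul_eq_mul, Int.gcd_mul_left, Int.natAbs_natCast]
  rw [Int.gcd_natCast_natCast, Int.gcd_natCast_natCast, Nat.gcd_mul_left]

theorem part1 (n : ℕ) (hn : 1 ≤ n) : (∀ A : Mat2, A ∈ Sset n →
      ∃ m : ℕ, ∃ B : Mat2, 0 < m ∧ m ^ 2 ∣ n ∧ B ∈ Sset (n / m ^ 2) ∧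
        Int.gcd (Int.gcd (B 0 0) (B 0 1)) (Int.gcd (B 1 0) (B 1 1)) = 1 ∧
        A = (m : ℤ) • B ∧
        (∀ m' : ℕ, ∀ B' : Mat2, 0 < m' → m' ^ 2 ∣ n → B' ∈ Sset (n / m' ^ 2) →
          Int.gcd (Int.gcd (B' 0 0) (B' 0 1)) (Int.gcd (B' 1 0) (B' 1 1)) = 1 →
          A = (m' : ℤ) • B' → m' = m ∧ B' = B)) := by
  intro A hA
  obtain ⟨h0, h1, h2, h3, h4⟩ := hA
  have hA00 : 0 < A 0 0 := lt_of_le_of_lt h0 h1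
  set m : ℕ := Int.gcd (↑(Int.gcd (A 0 0) (A 0 1))) (↑(Int.gcd (A 1 0) (A 1 1))) with hmdef
  have hmg : m = Nat.gcd (Int.gcd (A 0 0) (A 0 1)) (Int.gcd (A 1 0) (A 1 1)) :=
    Int.gcd_natCast_natCast _ _
  have hd1 : (m : ℤ) ∣ A 0 0 :=
    dvd_trans (Int.natCast_dvd_natCast.mpr (hmg ▸ Nat.gcd_dvd_left _ _)) (Int.gcd_dvd_left _ _)
  have hd2 : (m : ℤ) ∣ A 0 1 :=
    dvd_trans (Int.natCast_dvd_natCast.mpr (hmg ▸ Nat.gcd_dvd_left _ _)) (Int.gcd_dvd_right _ _)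
  have hd3 : (m : ℤ) ∣ A 1 0 :=
    dvd_trans (Int.natCast_dvd_natCast.mpr (hmg ▸ Nat.gcd_dvd_right _ _)) (Int.gcd_dvd_left _ _)
  have hd4 : (m : ℤ) ∣ A 1 1 :=
    dvd_trans (Int.natCast_dvd_natCast.mpr (hmg ▸ Nat.gcd_dvd_right _ _)) (Int.gcd_dvd_right _ _)
  obtain ⟨a', ha⟩ := hd1
  obtain ⟨b', hb⟩ := hd2
  obtain ⟨c', hc⟩ := hd3
  obtain ⟨d', hd⟩ := hd4
  have hmpos : 0 < m := by
    rcases Nat.eq_zero_or_pos m with h | h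
    · exfalso; rw [h] at ha; simp at ha; omega
    · exact h
  have hmZ : (0:ℤ) < (m:ℤ) := by exact_mod_cast hmpos
  set B : Mat2 := !![a', b'; c', d'] with hBdef
  have hB00 : B 0 0 = a' := by simp [hBdef]
  have hB01 : B 0 1 = b' := by simp [hBdef]
  have hB10 : B 1 0 = c' := by simp [hBdef]
  have hB11 : B 1 1 = d' := by simp [hBdef]
  have hAB : A = (m : ℤ) • B := by
    ext i j
    fin_cases i <;> fin_cases j <;>
      simp only [Matrix.smul_apply, smul_eq_mul, hB00, hB01, hB10, hB11] <;>
      [exact ha; exact hb; exact hc; exact hd]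
  have hmsq : (m : ℤ)^2 * (a' * d' - b' * c') = (n : ℤ) := by
    rw [← h4, ha, hb, hc, hd]; ring
  have hm2n : m ^ 2 ∣ n := by
    rw [← Int.natCast_dvd_natCast]
    push_cast
    exact ⟨a' * d' - b' * c', hmsq.symm⟩
  have hquot : ((n / m ^ 2 : ℕ) : ℤ) = a' * d' - b' * c' := by
    have h5 : ((m:ℤ))^2 * ((n / m^2 : ℕ) : ℤ) = (n : ℤ) := by
      rw [← Nat.cast_pow, ← Nat.cast_mul, Nat.mul_div_cancel' hm2n]
    exact mul_left_cancel₀ (by positivity) (h5.trans hmsq.symm)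
  have hBS : B ∈ Sset (n / m ^ 2) := by
    refine ⟨?_, ?_, ?_, ?_, ?_⟩
    · rw [hB10]
      have h0' : 0 ≤ (m:ℤ) * c' := hc ▸ h0
      nlinarith
    · rw [hB10, hB00]
      have : (m:ℤ) * c' < (m:ℤ) * a' := by rw [← hc, ← ha]; exact h1
      exact lt_of_mul_lt_mul_left this (le_of_lt hmZ)
    · rw [hB01]
      have h2' : 0 ≤ (m:ℤ) * b' := hb ▸ h2
      nlinarith
    · rw [hB01, hB11]
      have : (m:ℤ) * b' < (m:ℤ) * d' := by rw [← hb, ← hd]; exact h3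
      exact lt_of_mul_lt_mul_left this (le_of_lt hmZ)
    · rw [hB00, hB01, hB10, hB11, hquot]
  have hBgcd : Int.gcd (Int.gcd (B 0 0) (B 0 1)) (Int.gcd (B 1 0) (B 1 1)) = 1 := by
    have key : m = m * Int.gcd (Int.gcd (B 0 0) (B 0 1)) (Int.gcd (B 1 0) (B 1 1)) := by
      conv_lhs => rw [hmdef, hAB]
      rw [gcdA_mul]
    have h6 : 1 = Int.gcd (Int.gcd (B 0 0) (B 0 1)) (Int.gcd (B 1 0) (B 1 1)) :=
      Nat.eq_of_mul_eq_mul_left hmpos (by rw [mul_one, ← key])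
    exact h6.symm
  refine ⟨m, B, hmpos, hm2n, hBS, hBgcd, hAB, ?_⟩
  intro m' B' hm'pos hm'2 hB'S hB'gcd hAB'
  have hm'm : m' = m := by
    have key : m = m' * 1 := by
      conv_lhs => rw [hmdef, hAB']
      rw [gcdA_mul, hB'gcd]
    omega
  refine ⟨hm'm, ?_⟩
  subst hm'm
  have heq : (m : ℤ) • B' = (m : ℤ) • B := hAB'.symm.trans hAB
  ext i j
  have h7 := congrFun (congrFun heq i) j
  simp only [Matrix.smul_apply, smul_eq_mul] at h7
  exact mul_left_cancel₀ (by exact_mod_cast hmpos.ne') h7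

theorem heckeOperator_decomposition (n : ℕ) (hn : 1 ≤ n) :
    (∀ A : Mat2, A ∈ Sset n →
      ∃ m : ℕ, ∃ B : Mat2, 0 < m ∧ m ^ 2 ∣ n ∧ B ∈ Sset (n / m ^ 2) ∧
        Int.gcd (Int.gcd (B 0 0) (B 0 1)) (Int.gcd (B 1 0) (B 1 1)) = 1 ∧
        A = (m : ℤ) • B ∧
        (∀ m' : ℕ, ∀ B' : Mat2, 0 < m' → m' ^ 2 ∣ n → B' ∈ Sset (n / m' ^ 2) →
          Int.gcd (Int.gcd (B' 0 0) (B' 0 1)) (Int.gcd (B' 1 0) (B' 1 1)) = 1 →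
          A = (m' : ℤ) • B' → m' = m ∧ B' = B)) ∧
    (Tfull n = ∑ m ∈ (Finset.range (n + 1)).filter (fun m => 0 < m ∧ m ^ 2 ∣ n),
      sing !![(m : ℤ), 0; 0, (m : ℤ)] * Ttil (n / m ^ 2)) ∧
    (Tfull n = Ttil n ↔ Squarefree n) := by
  exact ⟨part1 n hn, part2 n, part3 n hn⟩
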